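/- arXiv:2308.00903 — 5 statements merged into one kernel-verified Lean document; each statement's English description precedes it below -/
import Mathlib

section
/- Let K be a field of characteristic 0, complete with respect to a discrete valuation v with residue field of characteristic p > 0, let π be a uniformizer, let ℓ be a positive integer with ℓ(p−1) < p·v(p) (i.e. ℓ < ε_K), and let d be a unit of the valuation ring O_K. Then for every finite field extension M/K, for the unique valuation w on M extending v (normalized so that w restricted to K^× equals v, with values in ℚ), every root z ∈ M of the polynomial (X+1)^p − 1 − π^ℓ d satisfies w(z) = ℓ/p. -/
set_option maxHeartbeats 1000000 in
/-- `K` is a field of characteristic `0`, complete with respect to a discrete valuation `v`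
(normalized so that `v : Kˣ → ℤ` is surjective), with residue field of characteristic
`p > 0`; we model this by a complete discrete valuation ring `O` with fraction field `K`,
uniformizer `π` (so `v π = 1`), and `v p = e` expressed by `p ~ π ^ e` in `O`.

Let `ℓ` be a positive integer with `ℓ (p - 1) < p · v p` (i.e. `ℓ < ε_K`) and let `d` be a
unit of `O`.  Then for every finite field extension `M/K` and (since `K` is complete, there
is exactly one such) every `ℚ`-valued additive valuation `w` on `M` extending `v` — the
extension condition being that `w a = n` whenever `a ∈ O` is associated to `π ^ n` — every
root `z ∈ M` of the polynomial `(X+1)^p - 1 - π^ℓ d` satisfies `w z = ℓ / p`. -/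
theorem statement2
    (O K : Type*) [CommRing O] [IsDomain O] [IsDiscreteValuationRing O]
    [Field K] [CharZero K] [Algebra O K] [IsFractionRing O K]
    [IsAdicComplete (IsLocalRing.maximalIdeal O) O]
    (p : ℕ) (hp : p.Prime) (hres : CharP (IsLocalRing.ResidueField O) p)
    (π : O) (hπ : Irreducible π)
    (e : ℕ) (he : Associated (p : O) (π ^ e))
    (ℓ : ℕ) (hℓpos : 0 < ℓ) (hℓ : ℓ * (p - 1) < p * e)
    (d : O) (hd : IsUnit d)
    (M : Type*) [Field M] [Algebra K M] [FiniteDimensional K M]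
    (w : AddValuation M (WithTop ℚ))
    (hw : ∀ (a : O) (n : ℕ), Associated a (π ^ n) →
      w (algebraMap K M (algebraMap O K a)) = ((n : ℚ) : WithTop ℚ))
    (z : M)
    (hz : (z + 1) ^ p - 1 - algebraMap K M (algebraMap O K (π ^ ℓ * d)) = 0) :
    w z = (((ℓ : ℚ) / (p : ℚ) : ℚ) : WithTop ℚ) := by
  classical
  set f : O →+* M := (algebraMap K M).comp (algebraMap O K) with hfdef
  have hinj : Function.Injective f :=
    (algebraMap K M).injective.comp (IsFractionRing.injective O K)
  -- nonnegativity of w on images of O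
  have hw0 : ∀ a : O, a ≠ 0 → (0 : WithTop ℚ) ≤ w (f a) := by
    intro a ha
    obtain ⟨n, hn⟩ := IsDiscreteValuationRing.associated_pow_irreducible ha hπ
    have := hw a n hn
    rw [show w (f a) = w (algebraMap K M (algebraMap O K a)) from rfl, this]
    exact_mod_cast (by positivity : (0:ℚ) ≤ (n:ℚ))
  have hwp : w (f (p : O)) = ((e : ℚ) : WithTop ℚ) := hw _ _ he
  have hwπd : w (f (π ^ ℓ * d)) = ((ℓ : ℚ) : WithTop ℚ) :=
    hw _ _ (associated_mul_unit_left (π ^ ℓ) d hd)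
  have hz' : (z + 1) ^ p - 1 = f (π ^ ℓ * d) := sub_eq_zero.mp hz
  -- z ≠ 0
  have hπd0 : (π ^ ℓ * d : O) ≠ 0 :=
    mul_ne_zero (pow_ne_zero _ hπ.ne_zero) hd.ne_zero
  have hzne : z ≠ 0 := by
    intro h0
    apply hπd0
    apply hinj
    rw [map_zero]
    rw [← hz', h0]
    ring
  obtain ⟨t, ht⟩ : ∃ t : ℚ, w z = (t : ℚ) := by
    have := (AddValuation.ne_top_iff w).mpr hzne
    cases hwz : w z with
    | top => exact absurd hwz this
    | coe t => exact ⟨t, rfl⟩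
  -- basic numerics
  have hp2 : 2 ≤ p := hp.two_le
  obtain ⟨q, hq⟩ : ∃ q, p = q + 1 := ⟨p - 1, by omega⟩
  have hq1 : 1 ≤ q := by omega
  have hkey : (ℓ : ℚ) * q < p * e := by
    have : (ℓ * (p-1) : ℕ) < (p * e : ℕ) := hℓ
    have h2 : ((ℓ * (p-1) : ℕ) : ℚ) < ((p * e : ℕ) : ℚ) := by exact_mod_cast this
    have h3 : ((p - 1 : ℕ) : ℚ) = (q : ℚ) := by rw [hq]; simp
    push_cast [h3] at h2
    linarith
  have hppos : (0:ℚ) < p := by positivity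
  have hℓq : (0:ℚ) < ℓ := by exact_mod_cast hℓpos
  have hepos : (0:ℚ) < e := by
    rcases Nat.eq_zero_or_pos e with h | h
    · exfalso; rw [h] at hℓ; omega
    · exact_mod_cast h
  -- the middle sum S
  set S : M := (z + 1) ^ p - 1 - z ^ p with hSdef
  set c : ℚ := e + min t ((q : ℚ) * t) with hcdef
  have hexp : S = ∑ j ∈ Finset.range q,
      z ^ (j + 1) * ((p.choose (j + 1) : ℕ) : M) := by
    rw [hSdef, add_pow]
    simp only [one_pow, mul_one]
    rw [hq, Finset.sum_range_succ, Finset.sum_range_succ']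
    simp [Nat.choose_self, Nat.choose_zero_right, ← hq]
    ring
  have hSc : (c : WithTop ℚ) ≤ w S := by
    rw [hexp]
    apply AddValuation.map_le_sum
    intro j hj
    have hjq : j + 1 ≤ q := Finset.mem_range.mp hj
    -- p ∣ choose
    have hdvd : p ∣ p.choose (j + 1) :=
      hp.dvd_choose_self (by omega) (by omega)
    obtain ⟨cj, hcj⟩ := hdvd
    have hcj0 : cj ≠ 0 := by
      intro h0
      rw [h0, mul_zero] at hcj
      have := Nat.choose_pos (show j + 1 ≤ p by omega)
      omega
    have hcast : ((p.choose (j + 1) : ℕ) : M) = f ((p : O)) * f ((cj : O)) := by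
      rw [← map_mul, ← Nat.cast_mul, ← hcj]
      simp [hfdef]
    rw [AddValuation.map_mul, AddValuation.map_pow, hcast, AddValuation.map_mul, hwp, ht]
    have h1 : ((e : ℚ) : WithTop ℚ) ≤ ((e : ℚ) : WithTop ℚ) + w (f ((cj : O))) := by
      have hcjO : (cj : O) ≠ 0 := by
        intro h0
        apply hcj0
        have h1 : algebraMap O K ((cj : ℕ) : O) = 0 := by rw [h0, map_zero]
        rw [map_natCast] at h1
        exact_mod_cast h1
      have := hw0 (cj : O) hcjO
      calc ((e : ℚ) : WithTop ℚ) = ((e : ℚ) : WithTop ℚ) + 0 := by rw [add_zero]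
        _ ≤ _ := add_le_add le_rfl this
    have h2 : ((min t ((q : ℚ) * t) : ℚ) : WithTop ℚ) ≤ (j + 1) • ((t : ℚ) : WithTop ℚ) := by
      rw [← WithTop.coe_nsmul, WithTop.coe_le_coe]
      have : (j + 1 : ℕ) • t = ((j : ℚ) + 1) * t := by
        rw [nsmul_eq_mul]; push_cast; ring
      rw [this]
      rcases le_or_gt 0 t with h | h
      · calc min t ((q:ℚ)*t) ≤ t := min_le_left _ _
          _ ≤ ((j:ℚ)+1) * t := by nlinarith
      · calc min t ((q:ℚ)*t) ≤ (q:ℚ)*t := min_le_right _ _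
          _ ≤ ((j:ℚ)+1) * t := by
            have : ((j:ℚ)+1) ≤ (q:ℚ) := by exact_mod_cast hjq
            nlinarith
    calc (c : WithTop ℚ) = ((min t ((q : ℚ) * t) : ℚ) : WithTop ℚ) + ((e : ℚ) : WithTop ℚ) := by
          rw [hcdef, ← WithTop.coe_add, WithTop.coe_inj]; ring
      _ ≤ (j + 1) • ((t : ℚ) : WithTop ℚ) + (((e : ℚ) : WithTop ℚ) + w (f ((cj : O)))) :=
          add_le_add h2 h1
  have hwzp : w (z ^ p) = ((p * t : ℚ) : WithTop ℚ) := by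
    rw [AddValuation.map_pow, ht, ← WithTop.coe_nsmul, WithTop.coe_inj, nsmul_eq_mul]
  rcases lt_trichotomy t ((ℓ : ℚ) / p) with hlt | heq | hgt
  · -- t < ℓ/p : contradiction
    exfalso
    have hzp : z ^ p = f (π ^ ℓ * d) - S := by rw [hSdef, ← hz']; ring
    have hbound : ((p * t : ℚ) : WithTop ℚ) < w (z ^ p) := by
      rw [hzp]
      have hc1 : ((p * t : ℚ) : WithTop ℚ) < w (f (π ^ ℓ * d)) := by
        rw [hwπd, WithTop.coe_lt_coe]
        calc (p:ℚ) * t < (p:ℚ) * ((ℓ:ℚ)/p) := by nlinarith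
          _ = (ℓ:ℚ) := by field_simp
      have hc2 : ((p * t : ℚ) : WithTop ℚ) < w S := by
        refine lt_of_lt_of_le ?_ hSc
        rw [WithTop.coe_lt_coe, hcdef]
        have hq1' : (1:ℚ) ≤ (q:ℚ) := by exact_mod_cast hq1
        have hpq' : ((q:ℚ) + 1) = (p:ℚ) := by rw [hq]; push_cast; ring
        rcases le_or_gt 0 t with h | h
        · have hmin : min t ((q:ℚ)*t) = t := min_eq_left (by nlinarith)
          rw [hmin]
          have h5 : ((q:ℚ)) * t ≤ (q:ℚ) * ((ℓ:ℚ)/p) :=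
            mul_le_mul_of_nonneg_left (le_of_lt hlt) (by positivity)
          have hqℓ : (q:ℚ) * ((ℓ:ℚ)/p) < e := by
            rw [mul_comm, div_mul_eq_mul_div, div_lt_iff₀ hppos]
            nlinarith
          nlinarith
        · have hmin : min t ((q:ℚ)*t) = (q:ℚ)*t := min_eq_right (by nlinarith)
          rw [hmin]
          nlinarith
      exact lt_of_lt_of_le (lt_min hc1 hc2) (AddValuation.map_sub w _ _)
    rw [hwzp] at hbound
    exact lt_irrefl _ hbound
  · rw [ht, heq]
  · -- t > ℓ/p : contradiction
    exfalso
    have htpos : 0 < t := lt_trans (by positivity) hgt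
    have hsum : f (π ^ ℓ * d) = z ^ p + S := by rw [hSdef, ← hz']; ring
    have h1 : ((ℓ : ℚ) : WithTop ℚ) < w (z ^ p) := by
      rw [hwzp, WithTop.coe_lt_coe]
      calc (ℓ:ℚ) = (p:ℚ) * ((ℓ:ℚ)/p) := by field_simp
        _ < (p:ℚ) * t := by nlinarith
    have h2 : ((ℓ : ℚ) : WithTop ℚ) < w S := by
      refine lt_of_lt_of_le ?_ hSc
      rw [WithTop.coe_lt_coe, hcdef]
      have hq1' : (1:ℚ) ≤ (q:ℚ) := by exact_mod_cast hq1
      have hpq' : ((q:ℚ) + 1) = (p:ℚ) := by rw [hq]; push_cast; ring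
      have hmin : min t ((q:ℚ)*t) = t := min_eq_left (by nlinarith)
      rw [hmin]
      have hB : (ℓ:ℚ)/p * (q:ℚ) < e := by
        rw [div_mul_eq_mul_div, div_lt_iff₀ hppos]; nlinarith
      have hA : (ℓ:ℚ)/(p:ℚ) * (q:ℚ) + (ℓ:ℚ)/(p:ℚ) = (ℓ:ℚ) := by
        calc (ℓ:ℚ)/(p:ℚ) * (q:ℚ) + (ℓ:ℚ)/(p:ℚ) = (ℓ:ℚ)/(p:ℚ) * ((q:ℚ)+1) := by ring
          _ = (ℓ:ℚ)/(p:ℚ) * (p:ℚ) := by rw [hpq']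
          _ = (ℓ:ℚ) := div_mul_cancel₀ _ (ne_of_gt hppos)
      linarith
    have := AddValuation.map_lt_add w h1 h2
    rw [← hsum, hwπd] at this
    exact lt_irrefl _ this
end

section
/- Let K be a field of characteristic 0, complete with respect to a discrete valuation v with residue field of characteristic p > 0, let π be a uniformizer, let ℓ be a positive integer with ℓ < ε_K := v(p)·p/(p−1) and gcd(ℓ, p) = 1, and let d be a unit of the valuation ring O_K. Fix an algebraic closure of K and an element z in it with z^p = 1 + π^ℓ d. Then the extension K(z)/K is totally ramified of degree p; that is, [K(z):K] = p and the ramification index of the unique extension of v to K(z) equals p (equivalently, the residue field extension is trivial). -/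
open IntermediateField

open Polynomial Finset


section helpers

lemma expand_pow' {R : Type*} [CommRing R] (t : R) (P : ℕ) :
    (1 + t) ^ (P + 2) =
      1 + (∑ i ∈ Finset.range (P + 1), t ^ (i + 1) * ((P + 2).choose (i + 1) : R))
        + t ^ (P + 2) := by
  rw [add_comm (1 : R) t, add_pow, Finset.sum_range_succ, Finset.sum_range_succ']
  simp [Nat.choose_self]
  ring

lemma wq_nsmul' (n : ℕ) (q : ℚ) :
    n • ((q : WithTop ℚ)) = (((n : ℚ) * q : ℚ) : WithTop ℚ) := by
  induction n with
  | zero => simp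
  | succ k ih =>
      rw [succ_nsmul, ih, ← WithTop.coe_add]
      exact congrArg _ (by push_cast; ring)

lemma wq_cancel' {x : WithTop ℚ} {a b : ℚ} (h : x + (b : WithTop ℚ) = (a : WithTop ℚ)) :
    x = ((a - b : ℚ) : WithTop ℚ) := by
  cases x with
  | top => simp [top_add] at h
  | coe q =>
      rw [← WithTop.coe_add] at h
      have h1 : q + b = a := by exact_mod_cast h
      have h2 : q = a - b := by linarith
      exact_mod_cast h2

lemma w_sum_eq' {L : Type*} [Field L] (w : AddValuation L (WithTop ℚ)) {ι : Type*}
    [DecidableEq ι] (s : Finset ι)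
    (f : ι → L) (i₀ : ι) (hi₀ : i₀ ∈ s) (hlt : ∀ i ∈ s, i ≠ i₀ → w (f i₀) < w (f i)) :
    w (∑ i ∈ s, f i) = w (f i₀) := by
  rw [← Finset.add_sum_erase s f hi₀]
  by_cases hT : w (f i₀) = ⊤
  · have he : s.erase i₀ = ∅ := by
      refine Finset.eq_empty_of_forall_notMem fun i hi => ?_
      have := hlt i (Finset.mem_of_mem_erase hi) (Finset.ne_of_mem_erase hi)
      rw [hT] at this
      exact absurd this not_top_lt
    rw [he]
    simp
  · refine AddValuation.map_add_eq_of_lt_left w ?_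
    refine AddValuation.map_lt_sum' w (lt_top_iff_ne_top.mpr hT) fun i hi => ?_
    exact hlt i (Finset.mem_of_mem_erase hi) (Finset.ne_of_mem_erase hi)

end helpers

lemma ordA {O : Type*} [CommRing O] [IsDomain O] [IsDiscreteValuationRing O] {x : O} {π : O}
    (hπ : Irreducible π) {n : ℕ} (h : Associated x (π ^ n)) :
    IsDiscreteValuationRing.addVal O x = n := by
  obtain ⟨u, hu⟩ := h.symm
  exact IsDiscreteValuationRing.addVal_def x u hπ n (by rw [← hu]; ring)

lemma ord_add_eq_left {O : Type*} [CommRing O] [IsDomain O] [IsDiscreteValuationRing O] {a b : O}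
    (h : IsDiscreteValuationRing.addVal O a < IsDiscreteValuationRing.addVal O b) :
    IsDiscreteValuationRing.addVal O (a + b) = IsDiscreteValuationRing.addVal O a := by
  set v := IsDiscreteValuationRing.addVal O with hv
  obtain ⟨ϖ, hϖ⟩ := IsDiscreteValuationRing.exists_irreducible O
  have hneg1 : v (-1) = 0 := by
    have := IsDiscreteValuationRing.addVal_def (-1 : O) (-1 : Oˣ) hϖ 0 (by simp)
    simpa using this
  have hb : v (-b) = v b := by
    have : v (-b) = v (-1) + v b := by
      rw [hv, ← IsDiscreteValuationRing.addVal_mul]; ring_nf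
    rw [this, hneg1, zero_add]
  refine le_antisymm ?_ ?_
  · have h1 : min (v (a + b)) (v (-b)) ≤ v a := by
      simpa using v.map_add (a + b) (-b)
    rcases min_le_iff.mp h1 with h2 | h2
    · exact h2
    · rw [hb] at h2
      exact absurd (lt_of_lt_of_le h h2) (lt_irrefl _)
  · have := v.map_add a b
    rwa [min_eq_left h.le] at this

lemma no_pth_root
    (O K : Type*) [CommRing O] [IsDomain O] [IsDiscreteValuationRing O]
    [Field K] [CharZero K] [Algebra O K] [IsFractionRing O K]
    (p : ℕ) (hp : p.Prime) (hres : CharP (IsLocalRing.ResidueField O) p)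
    (π : O) (hπ : Irreducible π)
    (e : ℕ) (he : Associated (p : O) (π ^ e))
    (ℓ : ℕ) (hℓpos : 0 < ℓ) (hℓ : ℓ * (p - 1) < p * e) (hℓp : Nat.Coprime ℓ p)
    (d : O) (hd : IsUnit d) (b : K) :
    b ^ p ≠ algebraMap O K (1 + π ^ ℓ * d) := by
  intro hb
  have hpne : ¬ (p ∣ ℓ) := by
    intro hdvd
    have h1 : p ∣ Nat.gcd ℓ p := Nat.dvd_gcd hdvd dvd_rfl
    rw [hℓp] at h1
    exact absurd (Nat.dvd_one.mp h1) hp.one_lt.ne'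
  have hπ0 : π ≠ 0 := hπ.ne_zero
  have hπd : π ^ ℓ * d ≠ 0 := mul_ne_zero (pow_ne_zero _ hπ0) hd.ne_zero
  -- b is integral over O, hence in O
  have hint : IsIntegral O b := by
    refine ⟨X ^ p - C (1 + π ^ ℓ * d), monic_X_pow_sub_C _ hp.ne_zero, ?_⟩
    simp only [eval₂_sub, eval₂_X_pow, eval₂_C, hb, sub_self]
  obtain ⟨b₀, rfl⟩ := IsIntegrallyClosed.isIntegral_iff.mp hint
  have hb₀ : b₀ ^ p = 1 + π ^ ℓ * d := by
    apply IsFractionRing.injective O K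
    rw [map_pow, hb]
  -- residue field argument : b₀ ≡ 1 mod π
  haveI : Fact p.Prime := ⟨hp⟩
  set φ := IsLocalRing.residue O with hφ
  have hπres : φ π = 0 := by
    apply Ideal.Quotient.eq_zero_iff_mem.mpr
    exact hπ.not_isUnit
  have h1 : (φ b₀) ^ p = 1 := by
    have h := congrArg φ hb₀
    rw [map_pow, map_add, map_one, map_mul, map_pow, hπres,
      zero_pow hℓpos.ne', zero_mul, add_zero] at h
    exact h
  have h2 : φ b₀ = 1 := by
    have h3 : (φ b₀ - 1) ^ p = 0 := by
      rw [sub_pow_char, h1, one_pow, sub_self]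
    have h4 := pow_eq_zero_iff hp.ne_zero |>.mp h3
    exact sub_eq_zero.mp h4
  have hmem : π ∣ b₀ - 1 := by
    have h5 : φ (b₀ - 1) = 0 := by rw [map_sub, h2, map_one, sub_self]
    have h6 : b₀ - 1 ∈ IsLocalRing.maximalIdeal O := Ideal.Quotient.eq_zero_iff_mem.mp h5
    rwa [hπ.maximalIdeal_eq, Ideal.mem_span_singleton] at h6
  set t := b₀ - 1 with htdef
  have hb' : (1 + t) ^ p = 1 + π ^ ℓ * d := by
    have h7 : 1 + t = b₀ := by rw [htdef]; ring
    rw [h7]; exact hb₀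
  have ht0 : t ≠ 0 := by
    rintro h
    rw [h, add_zero, one_pow] at hb'
    exact hπd (left_eq_add.mp hb')
  obtain ⟨P, hP⟩ : ∃ P, p = P + 2 := ⟨p - 2, by have := hp.two_le; omega⟩
  have hexp := expand_pow' t P
  rw [← hP] at hexp
  have hSum : (∑ i ∈ Finset.range (P + 1), t ^ (i + 1) * ((p.choose (i + 1) : O)))
      + t ^ p = π ^ ℓ * d := by
    have := hb'.symm.trans hexp
    rw [add_assoc] at this
    exact (add_left_cancel this).symm
  -- valuation computations
  set v := IsDiscreteValuationRing.addVal O with hv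
  obtain ⟨m, hm⟩ := IsDiscreteValuationRing.associated_pow_irreducible ht0 hπ
  have hvt : v t = m := ordA hπ hm
  have hm1 : 1 ≤ m := by
    by_contra h
    push_neg at h
    interval_cases m
    · rw [pow_zero] at hm
      exact hπ.not_isUnit (isUnit_of_dvd_unit hmem (associated_one_iff_isUnit.mp hm))
  have hvRHS : v (π ^ ℓ * d) = ℓ := by
    obtain ⟨du, rfl⟩ := hd
    exact ordA hπ ⟨du⁻¹, by simp [mul_assoc]⟩
  have hvp : v ((p : O)) = e := ordA hπ he
  have hvchoose : ∀ i ∈ Finset.range (P + 1), (e : ℕ∞) ≤ v ((p.choose (i + 1) : O)) := by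
    intro i hi
    have hi' : i + 1 < p := by simp only [Finset.mem_range] at hi; omega
    have hdvd : p ∣ p.choose (i + 1) := hp.dvd_choose_self (Nat.succ_ne_zero i) hi'
    have : (p : O) ∣ ((p.choose (i + 1) : O)) := Nat.cast_dvd_cast hdvd
    rw [← hvp]
    exact IsDiscreteValuationRing.addVal_le_iff_dvd.mpr this
  have hterm : ∀ i ∈ Finset.range (P + 1),
      ((e + m : ℕ) : ℕ∞) ≤ v (t ^ (i + 1) * ((p.choose (i + 1) : O))) := by
    intro i hi
    rw [hv, IsDiscreteValuationRing.addVal_mul, ← hv, v.map_pow, hvt]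
    have h2 : ((i + 1) • ((m : ℕ∞))) = (((i + 1) * m : ℕ) : ℕ∞) := by
      rw [nsmul_eq_mul]; exact_mod_cast rfl
    rw [h2]
    have h3 : m ≤ (i + 1) * m := Nat.le_mul_of_pos_left m (Nat.succ_pos i)
    calc ((e + m : ℕ) : ℕ∞) ≤ (((i + 1) * m : ℕ) : ℕ∞) + (e : ℕ∞) := by
          exact_mod_cast (by omega : e + m ≤ (i + 1) * m + e)
      _ ≤ _ := add_le_add le_rfl (hvchoose i hi)
  have hvtp : v (t ^ p) = ((p * m : ℕ) : ℕ∞) := by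
    rw [v.map_pow, hvt, nsmul_eq_mul]
    exact_mod_cast rfl
  by_cases hcase : (p - 1) * m < e
  · -- then ℓ = p * m, contradicting coprimality
    have hSlt : v (t ^ p) < v (∑ i ∈ Finset.range (P + 1),
        t ^ (i + 1) * ((p.choose (i + 1) : O))) := by
      rw [hvtp]
      refine lt_of_lt_of_le ?_ (AddValuation.map_le_sum v hterm)
      have hm_le : m ≤ p * m := Nat.le_mul_of_pos_left m hp.pos
      have hk : (p - 1) * m = p * m - m := Nat.sub_one_mul p m
      exact_mod_cast (by omega : p * m < e + m)
    have : v (t ^ p + ∑ i ∈ Finset.range (P + 1), t ^ (i + 1) * ((p.choose (i + 1) : O)))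
        = v (t ^ p) := ord_add_eq_left hSlt
    rw [add_comm, hSum, hvRHS, hvtp] at this
    have hℓpm : ℓ = p * m := by exact_mod_cast this
    exact hpne ⟨m, hℓpm⟩
  · -- then ℓ ≥ e + m, contradicting ℓ (p-1) < p e
    push_neg at hcase
    have hge : ((e + m : ℕ) : ℕ∞) ≤ v (π ^ ℓ * d) := by
      rw [← hSum]
      refine le_trans ?_ (v.map_add _ _)
      refine le_min (AddValuation.map_le_sum v hterm) ?_
      rw [hvtp]
      have hm_le : m ≤ p * m := Nat.le_mul_of_pos_left m hp.pos
      have hk : (p - 1) * m = p * m - m := Nat.sub_one_mul p m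
      exact_mod_cast (by omega : e + m ≤ p * m)
    rw [hvRHS] at hge
    have hge' : e + m ≤ ℓ := by exact_mod_cast hge
    have he_le : e ≤ p * e := Nat.le_mul_of_pos_left e hp.pos
    have hke : (p - 1) * e = p * e - e := Nat.sub_one_mul p e
    have hstep : p * e ≤ (p - 1) * e + (p - 1) * m := by omega
    have hfin : p * e ≤ (p - 1) * ℓ := by
      calc p * e ≤ (p - 1) * e + (p - 1) * m := hstep
        _ = (p - 1) * (e + m) := (mul_add _ _ _).symm
        _ ≤ (p - 1) * ℓ := Nat.mul_le_mul_left _ hge'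
    have hcomm : (p - 1) * ℓ = ℓ * (p - 1) := Nat.mul_comm _ _
    omega



set_option maxHeartbeats 2000000 in
/-- `K` is a field of characteristic `0`, complete with respect to a discrete valuation `v`
(normalized so that `v : Kˣ → ℤ` is surjective), with residue field of characteristic
`p > 0`; we model this by a complete discrete valuation ring `O` with fraction field `K`,
uniformizer `π` (so `v π = 1`), and `v p = e` expressed by `p ~ π ^ e` in `O`.

Let `ℓ` be a positive integer with `ℓ (p - 1) < p · v p` (i.e. `ℓ < ε_K`) and `gcd (ℓ, p) = 1`,
and let `d` be a unit of `O`.  Fix an algebraic closure of `K` and an element `z` in it with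
`z ^ p = 1 + π ^ ℓ d`.  Then `K(z)/K` is totally ramified of degree `p`: `[K(z) : K] = p`,
and for the (unique) `ℚ`-valued additive valuation `w` on `K(z)` extending `v` — the
extension condition being that `w a = n` whenever `a ∈ O` is associated to `π ^ n` — the
value group `w (K(z)ˣ)` is exactly `(1/p) ℤ`, i.e. the ramification index equals `p`. -/
theorem statement3
    (O K : Type*) [CommRing O] [IsDomain O] [IsDiscreteValuationRing O]
    [Field K] [CharZero K] [Algebra O K] [IsFractionRing O K]
    [IsAdicComplete (IsLocalRing.maximalIdeal O) O]
    (p : ℕ) (hp : p.Prime) (hres : CharP (IsLocalRing.ResidueField O) p)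
    (π : O) (hπ : Irreducible π)
    (e : ℕ) (he : Associated (p : O) (π ^ e))
    (ℓ : ℕ) (hℓpos : 0 < ℓ) (hℓ : ℓ * (p - 1) < p * e) (hℓp : Nat.Coprime ℓ p)
    (d : O) (hd : IsUnit d)
    (z : AlgebraicClosure K)
    (hz : z ^ p = algebraMap K (AlgebraicClosure K) (algebraMap O K (1 + π ^ ℓ * d))) :
    Module.finrank K K⟮z⟯ = p ∧
      ∀ w : AddValuation K⟮z⟯ (WithTop ℚ),
        (∀ (a : O) (n : ℕ), Associated a (π ^ n) →
          w (algebraMap K K⟮z⟯ (algebraMap O K a)) = ((n : ℚ) : WithTop ℚ)) →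
        ∀ q : ℚ, (∃ t : K⟮z⟯, t ≠ 0 ∧ w t = (q : WithTop ℚ)) ↔ ∃ n : ℤ, q = (n : ℚ) / p := by
  classical
  have hp2 : 2 ≤ p := hp.two_le
  have hppos : 0 < p := hp.pos
  have hp0 : (p : ℚ) ≠ 0 := by exact_mod_cast hppos.ne'
  have hπ0 : π ≠ 0 := hπ.ne_zero
  obtain ⟨du, rfl⟩ := hd
  have hπd : π ^ ℓ * (du : O) ≠ 0 := mul_ne_zero (pow_ne_zero _ hπ0) (Units.ne_zero du)
  have hpne : ¬ (p ∣ ℓ) := by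
    intro hdvd
    have h1 : p ∣ Nat.gcd ℓ p := Nat.dvd_gcd hdvd dvd_rfl
    rw [hℓp] at h1
    exact absurd (Nat.dvd_one.mp h1) hp.one_lt.ne'
  have he1 : 1 ≤ e := by
    rcases Nat.eq_zero_or_pos e with h0 | h0
    · exfalso
      rw [h0, pow_zero] at he
      have hu : IsUnit ((p : O)) := associated_one_iff_isUnit.mp he
      have := hu.map (IsLocalRing.residue O)
      rw [map_natCast, CharP.cast_eq_zero] at this
      exact not_isUnit_zero this
    · exact h0
  set A : K := algebraMap O K (1 + π ^ ℓ * (du : O)) with hA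
  have hroot : ∀ b : K, b ^ p ≠ A :=
    no_pth_root O K p hp hres π hπ e he ℓ hℓpos hℓ hℓp (du : O) du.isUnit
  have hirr : Irreducible (X ^ p - C A) := X_pow_sub_C_irreducible_of_prime hp hroot
  have hmonic : (X ^ p - C A).Monic := monic_X_pow_sub_C _ hp.ne_zero
  have heval : aeval z (X ^ p - C A) = 0 := by
    rw [map_sub, aeval_X_pow, aeval_C, hz, hA, sub_self]
  have hintz : IsIntegral K z := ⟨_, hmonic, heval⟩
  have hmin : minpoly K z = X ^ p - C A := (minpoly.eq_of_irreducible_of_monic hirr heval hmonic).symm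
  have hfin : Module.finrank K K⟮z⟯ = p := by
    rw [IntermediateField.adjoin.finrank hintz, hmin, natDegree_X_pow_sub_C]
  refine ⟨hfin, ?_⟩
  intro w hW q
  -- part B setup
  set g : K⟮z⟯ := IntermediateField.AdjoinSimple.gen K z with hgdef
  set u : K⟮z⟯ := g - 1 with hudef
  have hKzinj : Function.Injective (algebraMap K⟮z⟯ (AlgebraicClosure K)) :=
    (algebraMap K⟮z⟯ (AlgebraicClosure K)).injective
  have hKinj : Function.Injective (algebraMap K K⟮z⟯) := (algebraMap K K⟮z⟯).injective
  have hgz : algebraMap K⟮z⟯ (AlgebraicClosure K) g = z :=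
    IntermediateField.AdjoinSimple.algebraMap_gen K z
  have hgp : g ^ p = algebraMap K K⟮z⟯ A := by
    apply hKzinj
    rw [map_pow, hgz, hz]
    exact IsScalarTower.algebraMap_apply K K⟮z⟯ (AlgebraicClosure K) A
  have hu0 : u ≠ 0 := by
    intro h
    have hg1 : g = 1 := by rwa [hudef, sub_eq_zero] at h
    have h1 : algebraMap K K⟮z⟯ A = 1 := by rw [← hgp, hg1, one_pow]
    have h2 : A = 1 := hKinj (by rw [h1, map_one])
    have h3 : (1 : O) + π ^ ℓ * (du : O) = 1 :=
      IsFractionRing.injective O K (by rw [map_one, ← hA, h2])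
    exact hπd (left_eq_add.mp h3.symm)
  -- values coming from the compatibility hypothesis
  set Pi : K⟮z⟯ := algebraMap K K⟮z⟯ (algebraMap O K π) with hPidef
  have hwPi : w Pi = ((1 : ℚ) : WithTop ℚ) := by
    have := hW π 1 (by rw [pow_one])
    simpa using this
  have hPine : Pi ≠ 0 := by
    intro h
    rw [hPidef] at h
    have h2 : algebraMap O K π = 0 := hKinj (by rw [h, map_zero])
    exact hπ0 (IsFractionRing.injective O K (by rw [h2, map_zero]))
  set B : K⟮z⟯ := algebraMap K K⟮z⟯ (algebraMap O K (π ^ ℓ * (du : O))) with hBdef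
  have hwB : w B = ((ℓ : ℚ) : WithTop ℚ) :=
    hW (π ^ ℓ * (du : O)) ℓ ⟨du⁻¹, by simp [mul_assoc]⟩
  have hwO : ∀ a : O, (0 : WithTop ℚ) ≤ w (algebraMap K K⟮z⟯ (algebraMap O K a)) := by
    intro a
    by_cases ha : a = 0
    · rw [ha, map_zero, map_zero, AddValuation.map_zero]; exact le_top
    · obtain ⟨n, hn⟩ := IsDiscreteValuationRing.associated_pow_irreducible ha hπ
      rw [hW a n hn]
      exact_mod_cast (by positivity : (0:ℚ) ≤ (n:ℚ))
  have hwK : ∀ c : K, c ≠ 0 → ∃ N : ℤ, w (algebraMap K K⟮z⟯ c) = (((N : ℚ)) : WithTop ℚ) := by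
    intro c hc
    obtain ⟨a, b, hbmem, hab⟩ := IsFractionRing.div_surjective (A := O) c
    have hbO : b ≠ 0 := nonZeroDivisors.ne_zero hbmem
    have hbK : algebraMap O K b ≠ 0 :=
      fun h => hbO (IsFractionRing.injective O K (by rw [h, map_zero]))
    have haO : a ≠ 0 := by
      intro h
      rw [h, map_zero, zero_div] at hab
      exact hc hab.symm
    obtain ⟨na, hna⟩ := IsDiscreteValuationRing.associated_pow_irreducible haO hπ
    obtain ⟨nb, hnb⟩ := IsDiscreteValuationRing.associated_pow_irreducible hbO hπ
    have hceq : c * algebraMap O K b = algebraMap O K a := by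
      rw [← hab, div_mul_cancel₀ _ hbK]
    have hw1 : w (algebraMap K K⟮z⟯ c) + ((nb : ℚ) : WithTop ℚ) = ((na : ℚ) : WithTop ℚ) := by
      rw [← hW b nb hnb, ← w.map_mul, ← map_mul, hceq, hW a na hna]
    refine ⟨(na : ℤ) - nb, ?_⟩
    rw [wq_cancel' hw1]
    exact congrArg _ (by push_cast; ring)
  -- the binomial equation in L
  obtain ⟨P, hP⟩ : ∃ P, p = P + 2 := ⟨p - 2, by omega⟩
  have hexp := expand_pow' u P
  rw [← hP] at hexp
  set S : K⟮z⟯ := ∑ i ∈ Finset.range (P + 1), u ^ (i + 1) * ((p.choose (i + 1) : K⟮z⟯)) with hSdef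
  have hSB : S + u ^ p = B := by
    have h1 : (1 + u) ^ p = algebraMap K K⟮z⟯ A := by
      rw [hudef]
      have : (1 : K⟮z⟯) + (g - 1) = g := by ring
      rw [this, hgp]
    have h2 : algebraMap K K⟮z⟯ A = 1 + B := by
      rw [hA, hBdef, map_add, map_add, map_one, map_one]
    rw [hexp, h2, add_assoc] at h1
    exact add_left_cancel h1
  -- the value of u
  have hutop : w u ≠ ⊤ := (AddValuation.ne_top_iff w).mpr hu0
  obtain ⟨q₀, hq₀⟩ : ∃ q₀ : ℚ, w u = (q₀ : WithTop ℚ) := by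
    cases hwu : w u with
    | top => exact absurd hwu hutop
    | coe r => exact ⟨r, rfl⟩
  have hwchoose : ∀ i ∈ Finset.range (P + 1),
      ((e : ℚ) : WithTop ℚ) ≤ w ((p.choose (i + 1) : K⟮z⟯)) := by
    intro i hi
    have hi' : i + 1 < p := by simp only [Finset.mem_range] at hi; omega
    obtain ⟨c, hcEq⟩ := hp.dvd_choose_self (Nat.succ_ne_zero i) hi'
    have hcast : ((p.choose (i + 1) : K⟮z⟯)) =
        algebraMap K K⟮z⟯ (algebraMap O K ((p : O))) * algebraMap K K⟮z⟯ (algebraMap O K ((c : O))) := by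
      rw [map_natCast, map_natCast, map_natCast, map_natCast, ← Nat.cast_mul, hcEq]
    rw [hcast, w.map_mul]
    have hwp : w (algebraMap K K⟮z⟯ (algebraMap O K ((p : O)))) = ((e : ℚ) : WithTop ℚ) :=
      hW (p : O) e he
    rw [hwp]
    exact le_add_of_nonneg_right (hwO _)
  have hterm : ∀ i ∈ Finset.range (P + 1),
      (((e : ℚ) + (i + 1) * q₀ : ℚ) : WithTop ℚ) ≤ w (u ^ (i + 1) * ((p.choose (i + 1) : K⟮z⟯))) := by
    intro i hi
    rw [w.map_mul, w.map_pow, hq₀, wq_nsmul']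
    calc (((e : ℚ) + (i + 1) * q₀ : ℚ) : WithTop ℚ)
        = (((i + 1 : ℕ) * q₀ : ℚ) : WithTop ℚ) + ((e : ℚ) : WithTop ℚ) := by
          rw [← WithTop.coe_add]; exact congrArg _ (by push_cast; ring)
      _ ≤ (((i + 1 : ℕ) * q₀ : ℚ) : WithTop ℚ) + w ((p.choose (i + 1) : K⟮z⟯)) :=
          add_le_add_right (hwchoose i hi) _
  have hup : w (u ^ p) = (((p : ℚ) * q₀ : ℚ) : WithTop ℚ) := by
    rw [w.map_pow, hq₀, wq_nsmul']
  -- q₀ = ℓ / p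
  have hq₀pos : 0 < q₀ := by
    by_contra hneg
    push_neg at hneg
    have hBS : u ^ p = B + (-S) := by rw [← hSB]; ring
    have hlt : (((p : ℚ) * q₀ : ℚ) : WithTop ℚ) < w (B + (-S)) := by
      refine AddValuation.map_lt_add w ?_ ?_
      · rw [hwB]
        refine WithTop.coe_lt_coe.mpr ?_
        have : (0:ℚ) < ℓ := by exact_mod_cast hℓpos
        nlinarith
      · rw [AddValuation.map_neg]
        refine AddValuation.map_lt_sum' w (WithTop.coe_lt_top _) fun i hi => ?_
        refine lt_of_lt_of_le ?_ (hterm i hi)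
        refine WithTop.coe_lt_coe.mpr ?_
        have hiP : (i : ℚ) + 1 ≤ (P + 1 : ℚ) := by
          have : i < P + 1 := Finset.mem_range.mp hi
          push_cast
          exact_mod_cast Nat.succ_le_of_lt this
        have h1 : ((i:ℚ) + 1) * q₀ ≥ ((P:ℚ) + 1) * q₀ := by nlinarith
        have hpQ : (p : ℚ) = (P : ℚ) + 2 := by exact_mod_cast congrArg (Nat.cast : ℕ → ℚ) hP
        have heQ : (1:ℚ) ≤ (e:ℚ) := by exact_mod_cast he1
        nlinarith
    rw [← hBS, hup] at hlt
    exact absurd hlt (lt_irrefl _)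
  have hpQ : (p : ℚ) = (P : ℚ) + 2 := by exact_mod_cast congrArg (Nat.cast : ℕ → ℚ) hP
  have hq₀val : q₀ = (ℓ : ℚ) / (p : ℚ) := by
    rcases lt_or_ge (((P : ℚ) + 1) * q₀) ((e : ℚ)) with hc | hc
    · -- w B = w (u ^ p)
      have hlt : w (u ^ p) < w S := by
        rw [hup]
        refine AddValuation.map_lt_sum' w (WithTop.coe_lt_top _) fun i hi => ?_
        refine lt_of_lt_of_le ?_ (hterm i hi)
        refine WithTop.coe_lt_coe.mpr ?_
        have h1 : q₀ ≤ ((i:ℚ) + 1) * q₀ := by nlinarith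
        nlinarith
      have hBu : w B = w (u ^ p) := by
        rw [← hSB]
        exact AddValuation.map_add_eq_of_lt_right w hlt
      rw [hwB, hup] at hBu
      have : (ℓ : ℚ) = (p : ℚ) * q₀ := WithTop.coe_inj.mp hBu
      field_simp
      linarith
    · -- contradiction with hℓ
      exfalso
      have hge : (((e : ℚ) + q₀ : ℚ) : WithTop ℚ) ≤ w B := by
        rw [← hSB]
        refine AddValuation.map_le_add w ?_ ?_
        · refine AddValuation.map_le_sum w fun i hi => ?_
          refine le_trans ?_ (hterm i hi)
          refine WithTop.coe_le_coe.mpr ?_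
          have h1 : q₀ ≤ ((i:ℚ) + 1) * q₀ := by nlinarith
          linarith
        · rw [hup]
          refine WithTop.coe_le_coe.mpr ?_
          nlinarith
      rw [hwB] at hge
      have hge' : (e : ℚ) + q₀ ≤ (ℓ : ℚ) := WithTop.coe_le_coe.mp hge
      have hℓQ : (ℓ : ℚ) * ((P : ℚ) + 1) < ((P : ℚ) + 2) * (e : ℚ) := by
        have h5 := hℓ
        rw [hP, show P + 2 - 1 = P + 1 from rfl] at h5
        exact_mod_cast h5
      nlinarith
  have huval : w u = (((ℓ : ℚ) / (p : ℚ) : ℚ) : WithTop ℚ) := by rw [hq₀, hq₀val]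
  -- linear independence of powers of u
  have hming : minpoly K g = minpoly K z := by
    have h9 := minpoly.algebraMap_eq (A := K) (B := K⟮z⟯) (B' := AlgebraicClosure K) hKzinj g
    rw [hgz] at h9
    exact h9.symm
  have hdegg : (minpoly K g).natDegree = p := by rw [hming, hmin, natDegree_X_pow_sub_C]
  have li : LinearIndependent K (fun i : Fin p => u ^ (i : ℕ)) := by
    rw [linearIndependent_iff']
    intro s coef hsum i hi
    by_contra hci
    set Pp : Polynomial K := ∑ j ∈ s, Polynomial.C (coef j) * Polynomial.X ^ (j : ℕ) with hPp
    have hcoeffi : Pp.coeff (i : ℕ) = coef i := by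
      rw [hPp, Polynomial.finset_sum_coeff]
      rw [Finset.sum_eq_single i]
      · rw [Polynomial.coeff_C_mul, Polynomial.coeff_X_pow, if_pos rfl, mul_one]
      · intro j hjs hji
        rw [Polynomial.coeff_C_mul, Polynomial.coeff_X_pow,
          if_neg (fun hh => hji (Fin.ext hh).symm), mul_zero]
      · intro h; exact absurd hi h
    have hPpne : Pp ≠ 0 := by
      intro h0
      rw [h0, Polynomial.coeff_zero] at hcoeffi
      exact hci hcoeffi.symm
    have haev : Polynomial.aeval u Pp = 0 := by
      rw [hPp, map_sum, ← hsum]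
      refine Finset.sum_congr rfl fun j hj => ?_
      rw [map_mul, Polynomial.aeval_C, Polynomial.aeval_X_pow, Algebra.smul_def]
    set Qq : Polynomial K := Pp.comp (Polynomial.X - Polynomial.C 1) with hQq
    have hQne : Qq ≠ 0 := by
      intro h0
      apply hPpne
      have hcomp : Pp = Qq.comp (Polynomial.X + Polynomial.C 1) := by
        rw [hQq, Polynomial.comp_assoc]
        simp [Polynomial.sub_comp]
      rw [hcomp, h0, Polynomial.zero_comp]
    have haevQ : Polynomial.aeval g Qq = 0 := by
      rw [hQq, Polynomial.aeval_comp, map_sub, Polynomial.aeval_X, Polynomial.aeval_C, map_one,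
        ← hudef]
      exact haev
    have hdegP : Pp.natDegree ≤ p - 1 := by
      refine Polynomial.natDegree_sum_le_of_forall_le s _ fun j hj => ?_
      refine le_trans (Polynomial.natDegree_C_mul_X_pow_le (coef j) (j : ℕ)) ?_
      have := j.isLt
      omega
    have hdegQ : Qq.natDegree < p := by
      rw [hQq, Polynomial.natDegree_comp]
      have h1 : (Polynomial.X - Polynomial.C (1 : K)).natDegree = 1 :=
        Polynomial.natDegree_X_sub_C 1
      rw [h1, mul_one]
      omega
    have hle := minpoly.degree_le_of_ne_zero K g hQne haevQ
    have hle' : (minpoly K g).natDegree ≤ Qq.natDegree := Polynomial.natDegree_le_natDegree hle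
    omega
  haveI : Nonempty (Fin p) := ⟨⟨0, hppos⟩⟩
  have hcard : Fintype.card (Fin p) = Module.finrank K K⟮z⟯ := by rw [Fintype.card_fin, hfin]
  set bas : Module.Basis (Fin p) K K⟮z⟯ := basisOfLinearIndependentOfCardEqFinrank li hcard with hbasdef
  have hbas : ∀ i : Fin p, bas i = u ^ (i : ℕ) := by
    intro i
    rw [hbasdef]
    exact congrFun (coe_basisOfLinearIndependentOfCardEqFinrank li hcard) i
  constructor
  · rintro ⟨t, ht0, hwt⟩
    set c := bas.repr t with hcdef
    have hsum : ∑ i : Fin p, c i • u ^ (i : ℕ) = t := by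
      conv_rhs => rw [← Module.Basis.sum_repr bas t]
      exact Finset.sum_congr rfl fun i _ => by rw [hbas i]
    have hval : ∀ i : Fin p, c i ≠ 0 → ∃ N : ℤ,
        w (c i • u ^ (i : ℕ)) = ((((N : ℚ) + (i : ℕ) * ((ℓ : ℚ) / (p : ℚ))) : ℚ) : WithTop ℚ) := by
      intro i hi
      obtain ⟨N, hN⟩ := hwK (c i) hi
      refine ⟨N, ?_⟩
      rw [Algebra.smul_def, w.map_mul, hN, w.map_pow, huval, wq_nsmul', ← WithTop.coe_add]
    obtain ⟨i₀, hi₀mem, hmin₀⟩ := Finset.exists_min_image Finset.univ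
      (fun i : Fin p => w (c i • u ^ (i : ℕ))) ⟨⟨0, hppos⟩, Finset.mem_univ _⟩
    obtain ⟨j, hj⟩ : ∃ j, c j ≠ 0 := by
      by_contra hcon
      push_neg at hcon
      apply ht0
      rw [← hsum]
      exact Finset.sum_eq_zero fun i _ => by rw [hcon i, zero_smul]
    have hνj : w (c j • u ^ (j : ℕ)) ≠ ⊤ :=
      (AddValuation.ne_top_iff w).mpr (smul_ne_zero hj (pow_ne_zero _ hu0))
    have hν₀top : w (c i₀ • u ^ (i₀ : ℕ)) ≠ ⊤ := by
      intro h
      have h2 := hmin₀ j (Finset.mem_univ _)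
      rw [h] at h2
      exact hνj (top_le_iff.mp h2)
    have hci₀ : c i₀ ≠ 0 := by
      intro h
      apply hν₀top
      rw [h, zero_smul, AddValuation.map_zero]
    have hstrict : ∀ i ∈ Finset.univ, i ≠ i₀ →
        w (c i₀ • u ^ (i₀ : ℕ)) < w (c i • u ^ (i : ℕ)) := by
      intro i _ hne
      rcases eq_or_ne (c i) 0 with h0 | h0
      · rw [h0, zero_smul, AddValuation.map_zero]
        exact lt_top_iff_ne_top.mpr hν₀top
      · refine lt_of_le_of_ne (hmin₀ i (Finset.mem_univ _)) ?_
        obtain ⟨N₀, hN₀⟩ := hval i₀ hci₀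
        obtain ⟨N₁, hN₁⟩ := hval i h0
        rw [hN₀, hN₁]
        intro hEq
        have hEq' : (N₀ : ℚ) + ((i₀ : ℕ) : ℚ) * ((ℓ : ℚ) / p)
            = (N₁ : ℚ) + ((i : ℕ) : ℚ) * ((ℓ : ℚ) / p) := WithTop.coe_inj.mp hEq
        have hZ : (N₀ : ℚ) * p + ((i₀ : ℕ) : ℚ) * ℓ = (N₁ : ℚ) * p + ((i : ℕ) : ℚ) * ℓ := by
          field_simp at hEq'
          linarith
        have hZ' : N₀ * (p : ℤ) + ((i₀ : ℕ) : ℤ) * (ℓ : ℤ)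
            = N₁ * (p : ℤ) + ((i : ℕ) : ℤ) * (ℓ : ℤ) := by exact_mod_cast hZ
        have hdvd : ((p : ℤ)) ∣ (((i₀ : ℕ) : ℤ) - ((i : ℕ) : ℤ)) * (ℓ : ℤ) :=
          ⟨N₁ - N₀, by linear_combination hZ'⟩
        have hpZ : Prime ((p : ℤ)) := Nat.prime_iff_prime_int.mp hp
        have hpl : ¬ ((p : ℤ)) ∣ (ℓ : ℤ) := by
          rw [Int.natCast_dvd_natCast]
          exact hpne
        have hdvd2 : ((p : ℤ)) ∣ (((i₀ : ℕ) : ℤ) - ((i : ℕ) : ℤ)) :=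
          (hpZ.dvd_mul.mp hdvd).resolve_right hpl
        obtain ⟨k, hk⟩ := hdvd2
        have hb1 : ((i₀ : ℕ) : ℤ) < p := by exact_mod_cast i₀.isLt
        have hb2 : ((i : ℕ) : ℤ) < p := by exact_mod_cast i.isLt
        have hb3 : (0 : ℤ) ≤ ((i₀ : ℕ) : ℤ) := by positivity
        have hb4 : (0 : ℤ) ≤ ((i : ℕ) : ℤ) := by positivity
        have hppos' : (0 : ℤ) < (p : ℤ) := by exact_mod_cast hppos
        have hk0 : k = 0 := by
          rcases lt_trichotomy k 0 with hh | hh | hh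
          · nlinarith
          · exact hh
          · nlinarith
        apply hne
        apply Fin.ext
        have hii : ((i₀ : ℕ) : ℤ) = ((i : ℕ) : ℤ) := by
          rw [hk0, mul_zero] at hk
          linarith
        exact_mod_cast hii.symm
    have hwt' : w t = w (c i₀ • u ^ (i₀ : ℕ)) := by
      rw [← hsum]
      exact w_sum_eq' w Finset.univ _ i₀ (Finset.mem_univ _) hstrict
    obtain ⟨N₀, hN₀⟩ := hval i₀ hci₀
    refine ⟨N₀ * p + (i₀ : ℕ) * ℓ, ?_⟩
    have hqeq : (q : WithTop ℚ) = ((((N₀ : ℚ) + ((i₀ : ℕ) : ℚ) * ((ℓ : ℚ) / p)) : ℚ) : WithTop ℚ) := by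
      rw [← hwt, hwt', hN₀]
    have hq' : q = (N₀ : ℚ) + ((i₀ : ℕ) : ℚ) * ((ℓ : ℚ) / p) := WithTop.coe_inj.mp hqeq
    rw [hq']
    push_cast
    field_simp
  · rintro ⟨n, rfl⟩
    have hgcd : (1 : ℤ) = (ℓ : ℤ) * Nat.gcdA ℓ p + (p : ℤ) * Nat.gcdB ℓ p := by
      have hh := Nat.gcd_eq_gcd_ab ℓ p
      rw [hℓp] at hh
      exact_mod_cast hh
    set x : ℤ := n * Nat.gcdA ℓ p with hxdef
    set y : ℤ := n * Nat.gcdB ℓ p with hydef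
    have hxy : (n : ℤ) = (ℓ : ℤ) * x + (p : ℤ) * y := by
      rw [hxdef, hydef]
      linear_combination n * hgcd
    set x1 := x.toNat with hx1
    set x2 := (-x).toNat with hx2
    set y1 := y.toNat with hy1
    set y2 := (-y).toNat with hy2
    have hx12 : (x1 : ℤ) - (x2 : ℤ) = x := by omega
    have hy12 : (y1 : ℤ) - (y2 : ℤ) = y := by omega
    set tnum : K⟮z⟯ := u ^ x1 * Pi ^ y1 with htnum
    set tden : K⟮z⟯ := u ^ x2 * Pi ^ y2 with htden
    have hnumne : tnum ≠ 0 := mul_ne_zero (pow_ne_zero _ hu0) (pow_ne_zero _ hPine)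
    have hdenne : tden ≠ 0 := mul_ne_zero (pow_ne_zero _ hu0) (pow_ne_zero _ hPine)
    refine ⟨tnum / tden, div_ne_zero hnumne hdenne, ?_⟩
    have hwnum : w tnum = (((x1 : ℚ) * ((ℓ : ℚ) / p) + (y1 : ℚ) : ℚ) : WithTop ℚ) := by
      rw [htnum, w.map_mul, w.map_pow, w.map_pow, huval, hwPi, wq_nsmul', wq_nsmul',
        ← WithTop.coe_add]
      exact congrArg _ (by push_cast; ring)
    have hwden : w tden = (((x2 : ℚ) * ((ℓ : ℚ) / p) + (y2 : ℚ) : ℚ) : WithTop ℚ) := by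
      rw [htden, w.map_mul, w.map_pow, w.map_pow, huval, hwPi, wq_nsmul', wq_nsmul',
        ← WithTop.coe_add]
      exact congrArg _ (by push_cast; ring)
    have hmul : (tnum / tden) * tden = tnum := div_mul_cancel₀ _ hdenne
    have hw1 : w (tnum / tden) + (((x2 : ℚ) * ((ℓ : ℚ) / p) + (y2 : ℚ) : ℚ) : WithTop ℚ)
        = (((x1 : ℚ) * ((ℓ : ℚ) / p) + (y1 : ℚ) : ℚ) : WithTop ℚ) := by
      rw [← hwden, ← hwnum, ← w.map_mul, hmul]
    rw [wq_cancel' hw1]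
    refine congrArg _ ?_
    have hxQ : (x1 : ℚ) - (x2 : ℚ) = ((x : ℤ) : ℚ) := by exact_mod_cast congrArg (Int.cast : ℤ → ℚ) hx12
    have hyQ : (y1 : ℚ) - (y2 : ℚ) = ((y : ℤ) : ℚ) := by exact_mod_cast congrArg (Int.cast : ℤ → ℚ) hy12
    have hnQ : ((n : ℤ) : ℚ) = (ℓ : ℚ) * ((x : ℤ) : ℚ) + (p : ℚ) * ((y : ℤ) : ℚ) := by
      exact_mod_cast congrArg (Int.cast : ℤ → ℚ) hxy
    calc (x1 : ℚ) * ((ℓ : ℚ) / p) + (y1 : ℚ) - ((x2 : ℚ) * ((ℓ : ℚ) / p) + (y2 : ℚ))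
        = (((x1 : ℚ) - x2) * ℓ + ((y1 : ℚ) - y2) * p) / p := by field_simp; ring
      _ = (((x : ℤ) : ℚ) * ℓ + ((y : ℤ) : ℚ) * p) / p := by rw [hxQ, hyQ]
      _ = ((n : ℤ) : ℚ) / p := by rw [hnQ]; ring
      _ = (n : ℚ) / p := rfl
end

section
/- Let K be a field of characteristic p > 0 with [K:K^p] = p^δ, let α₁, …, α_δ ∈ K be a p-basis of K, and let K₀ be a countable subfield of K. Then there exists a countable intermediate field M of the extension K/K₀ containing α₁, …, α_δ such that α₁, …, α_δ is a p-basis of M (i.e. the p^δ monomials α₁^{e₁}···α_δ^{e_δ} with 0 ≤ e_i < p form a basis of M as a vector space over M^p). -/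
/-- The subfield `F^p = {x^p : x ∈ F}` of a field `F` of characteristic `p`,
the image of the Frobenius endomorphism. -/
noncomputable def pthPowerSubfield (F : Type*) [Field F] (p : ℕ) [Fact p.Prime] [CharP F p] :
    Subfield F :=
  (frobenius F p).fieldRange

/-- A family `α₁, …, α_δ` of elements of a field `F` of characteristic `p` is a *p-basis*
of `F` if the `p ^ δ` monomials `α₁^{e₁} ⋯ α_δ^{e_δ}` with `0 ≤ eᵢ < p` form a basis of `F`
as a vector space over the subfield `F^p`. -/
noncomputable def IsPBasis (p : ℕ) [Fact p.Prime] (F : Type*) [Field F] [CharP F p]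
    {δ : ℕ} (α : Fin δ → F) : Prop :=
  LinearIndependent (pthPowerSubfield F p)
      (fun e : Fin δ → Fin p => ∏ i, α i ^ (e i : ℕ)) ∧
    Submodule.span (pthPowerSubfield F p)
      (Set.range fun e : Fin δ → Fin p => ∏ i, α i ^ (e i : ℕ)) = ⊤

/-- Closure of a countable set in a field is countable. -/
lemma countable_subfield_closure {K : Type*} [Field K] {s : Set K} (hs : s.Countable) :
    Countable (Subfield.closure s) := by
  rw [← Cardinal.mk_le_aleph0_iff]
  refine le_trans (Subfield.cardinalMk_closure_le_max s) ?_
  simp [Cardinal.mk_le_aleph0_iff.mpr hs.to_subtype]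

/-- Let `K` be a field of characteristic `p > 0` with `[K : K^p] = p ^ δ`, let `α₁, …, α_δ ∈ K`
be a `p`-basis of `K`, and let `K₀` be a countable subfield of `K`.  Then there is a
countable intermediate field `M` of `K/K₀` containing `α₁, …, α_δ` such that `α₁, …, α_δ`
is a `p`-basis of `M`. -/
theorem statement6
    (p : ℕ) [Fact p.Prime] (K : Type*) [Field K] [CharP K p]
    (δ : ℕ) (hdim : Module.finrank (pthPowerSubfield K p) K = p ^ δ)
    (α : Fin δ → K) (hα : IsPBasis p K α)
    (K₀ : Subfield K) (hK₀ : Countable K₀) :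
    ∃ M : Subfield K, K₀ ≤ M ∧ Countable M ∧
      ∃ hM : ∀ i, α i ∈ M, IsPBasis p M (fun i => (⟨α i, hM i⟩ : M)) := by
  classical
  set v : (Fin δ → Fin p) → K := fun e => ∏ i, α i ^ ((e i : ℕ)) with hv
  -- basis of K over K^p
  let b : Module.Basis (Fin δ → Fin p) (pthPowerSubfield K p) K := Module.Basis.mk hα.1 hα.2.ge
  have hb : ∀ e, b e = v e := fun e => Module.Basis.mk_apply _ _ _
  -- coordinate roots
  have hcoef : ∀ (x : K) (e : Fin δ → Fin p), ∃ y : K, y ^ p = (b.repr x e : K) := by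
    intro x e
    obtain ⟨y, hy⟩ := (b.repr x e).2
    exact ⟨y, hy⟩
  set c : K → (Fin δ → Fin p) → K := fun x e => (hcoef x e).choose with hcdef
  have hc : ∀ x e, (c x e) ^ p = (b.repr x e : K) := fun x e => (hcoef x e).choose_spec
  have hsum : ∀ x : K, ∑ e, (c x e) ^ p * v e = x := by
    intro x
    conv_rhs => rw [← b.sum_repr x]
    refine Finset.sum_congr rfl fun e _ => ?_
    rw [hc, hb, Algebra.smul_def]
    rfl
  -- the tower
  set step : Subfield K → Subfield K := fun S =>
    Subfield.closure ((S : Set K) ∪ ⋃ x ∈ (S : Set K), Set.range (c x)) with hstep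
  have hstep_le : ∀ S, S ≤ step S := fun S => fun x hx =>
    Subfield.subset_closure (Set.mem_union_left _ hx)
  have hstep_c : ∀ S, ∀ x ∈ S, ∀ e, c x e ∈ step S := by
    intro S x hx e
    exact Subfield.subset_closure (Set.mem_union_right _
      (Set.mem_biUnion hx ⟨e, rfl⟩))
  set T : ℕ → Subfield K := fun n =>
    Nat.rec (Subfield.closure ((K₀ : Set K) ∪ Set.range α)) (fun _ S => step S) n with hT
  have hTmono : Monotone T := monotone_nat_of_le_succ fun n => hstep_le (T n)
  have hTdir : Directed (· ≤ ·) T := hTmono.directed_le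
  set M : Subfield K := ⨆ n, T n with hM
  have hmemM : ∀ x, x ∈ M ↔ ∃ n, x ∈ T n := fun x => Subfield.mem_iSup_of_directed hTdir
  have hTleM : ∀ n, T n ≤ M := fun n => le_iSup T n
  -- countability
  have hTcount : ∀ n, Countable (T n) := by
    intro n
    induction n with
    | zero =>
      refine countable_subfield_closure (Set.Countable.union ?_ (Set.countable_range α))
      exact (Set.countable_coe_iff.mp hK₀)
    | succ n ih =>
      refine countable_subfield_closure (Set.Countable.union (Set.countable_coe_iff.mp ih) ?_)
      exact Set.Countable.biUnion (Set.countable_coe_iff.mp ih)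
        (fun x _ => Set.countable_range (c x))
  have hMcount : Countable M := by
    have hset : (M : Set K) = ⋃ n, (T n : Set K) := by
      ext x
      simp [hmemM x, SetLike.mem_coe]
    have : (M : Set K).Countable := by
      rw [hset]
      exact Set.countable_iUnion fun n => Set.countable_coe_iff.mp (hTcount n)
    exact this.to_subtype
  -- basic memberships
  have hK₀M : K₀ ≤ M := le_trans
    (fun x hx => Subfield.subset_closure (Set.mem_union_left _ hx)) (hTleM 0)
  have hαM : ∀ i, α i ∈ M := fun i =>
    hTleM 0 (Subfield.subset_closure (Set.mem_union_right _ ⟨i, rfl⟩))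
  have hcM : ∀ x ∈ M, ∀ e, c x e ∈ M := by
    intro x hx e
    obtain ⟨n, hn⟩ := (hmemM x).mp hx
    exact hTleM (n + 1) (hstep_c (T n) x hn e)
  have hterm : ∀ (s : pthPowerSubfield M p) (m : M), ((s • m : M) : K) = ((s : M) : K) * (m : K) := by
    intro s m
    rw [Algebra.smul_def]
    push_cast
    rfl
  have hw : ∀ e : Fin δ → Fin p,
      ((∏ i, (⟨α i, hαM i⟩ : M) ^ ((e i : ℕ)) : M) : K) = v e := by
    intro e
    push_cast
    rfl
  have hsumcoe : ∀ f : (Fin δ → Fin p) → M, ((∑ e, f e : M) : K) = ∑ e, ((f e) : K) := by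
    intro f
    simpa using map_sum M.subtype f Finset.univ
  refine ⟨M, hK₀M, hMcount, hαM, ?_, ?_⟩
  · -- linear independence
    rw [Fintype.linearIndependent_iff]
    intro g hg e
    have hGmem : ∀ e, ((g e : M) : K) ∈ pthPowerSubfield K p := by
      intro e
      obtain ⟨y, hy⟩ := (g e).2
      exact ⟨(y : K), by rw [← hy]; rfl⟩
    set G : (Fin δ → Fin p) → pthPowerSubfield K p := fun e => ⟨((g e : M) : K), hGmem e⟩
    have hG : ∑ e, G e • v e = 0 := by
      have h0 := congrArg (fun m : M => (m : K)) hg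
      simp only at h0
      rw [hsumcoe, ZeroMemClass.coe_zero] at h0
      rw [← h0]
      refine Finset.sum_congr rfl fun e _ => ?_
      rw [hterm, hw, Algebra.smul_def]
      rfl
    have hGe := Fintype.linearIndependent_iff.mp hα.1 G hG e
    have hK : ((g e : M) : K) = 0 := by
      have h2 := congrArg (fun z : pthPowerSubfield K p => (z : K)) hGe
      simpa [G] using h2
    have hM0 : (g e : M) = 0 := Subtype.ext hK
    exact Subtype.ext hM0
  · -- spanning
    rw [eq_top_iff]
    rintro ⟨x, hx⟩ -
    have key : (⟨x, hx⟩ : M) = ∑ e,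
        (⟨⟨(c x e) ^ p, pow_mem (hcM x hx e) p⟩,
          ⟨⟨c x e, hcM x hx e⟩, rfl⟩⟩ : pthPowerSubfield M p) •
          (∏ i, (⟨α i, hαM i⟩ : M) ^ ((e i : ℕ))) := by
      apply Subtype.ext
      show x = _
      rw [hsumcoe]
      conv_lhs => rw [← hsum x]
      refine Finset.sum_congr rfl fun e _ => ?_
      rw [hterm, hw]
    rw [key]
    exact Submodule.sum_mem _ fun e _ =>
      Submodule.smul_mem _ _ (Submodule.subset_span ⟨e, rfl⟩)
end

section
/- Let p be a prime, let K be an infinite field of characteristic p, let L/K be a finite Galois extension with Galois group H = Gal(L/K), and let d₀ ∈ L. Then there exists λ₀ ∈ L such that for every nonzero function m : H → 𝔽_p one has Σ_{σ ∈ H} m(σ)·(σ(d₀) + σ(λ₀)^p) ≠ 0 in L (where 𝔽_p is viewed as the prime subfield of L). -/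
open Pointwise

/-- Let `p` be a prime, `K` an infinite field of characteristic `p`, `L/K` a finite Galois
extension with Galois group `H = Gal(L/K)`, and `d₀ ∈ L`.  Then there exists `λ₀ ∈ L` such
that for every nonzero function `m : H → 𝔽_p` one has
`∑_{σ ∈ H} m(σ) · (σ(d₀) + σ(λ₀)^p) ≠ 0` in `L`
(where `𝔽_p` is viewed inside `L` through the prime subfield). -/
theorem statement7
    (p : ℕ) (hp : p.Prime)
    (K L : Type*) [Field K] [Field L] [Algebra K L] [CharP K p]
    [FiniteDimensional K L] [IsGalois K L]
    (hK : Infinite K)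
    (d₀ : L) :
    ∃ lam₀ : L, ∀ m : (L ≃ₐ[K] L) → ZMod p, m ≠ 0 →
      ∑ σ : L ≃ₐ[K] L, ((m σ).val : L) * (σ d₀ + (σ lam₀) ^ p) ≠ 0 := by
  classical
  haveI := Fact.mk hp
  haveI : CharP L p := charP_of_injective_algebraMap (algebraMap K L).injective p
  haveI : ExpChar L p := .prime hp
  -- the K-linear map T m
  set G := L ≃ₐ[K] L with hG
  let T : (G → ZMod p) → (L →ₗ[K] L) := fun m =>
    { toFun := fun x => ∑ σ : G, ((m σ).val : L) * σ x
      map_add' := by intro x y; simp [map_add, mul_add, Finset.sum_add_distrib]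
      map_smul' := by
        intro c x
        simp only [map_smul, RingHom.id_apply, Finset.smul_sum, mul_smul_comm] }
  -- T m ≠ 0 for m ≠ 0 (Dedekind)
  have hT : ∀ m : G → ZMod p, m ≠ 0 → T m ≠ 0 := by
    intro m hm h0
    have li : LinearIndependent L (fun σ : G => ((σ : L →* L) : L → L)) := by
      refine (linearIndependent_monoidHom L L).comp (fun σ : G => (σ : L →* L)) ?_
      intro σ τ h
      exact AlgEquiv.ext fun x => DFunLike.congr_fun h x
    have := Fintype.linearIndependent_iff.mp li (fun σ => ((m σ).val : L)) ?_
    · obtain ⟨σ₀, hσ₀⟩ := Function.ne_iff.mp hm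
      have hv : ((m σ₀).val : L) = 0 := this σ₀
      rw [CharP.cast_eq_zero_iff L p] at hv
      have hlt : (m σ₀).val < p := ZMod.val_lt (m σ₀)
      have hne : (m σ₀).val ≠ 0 := fun h => hσ₀ ((ZMod.val_eq_zero _).mp h)
      exact absurd (Nat.le_of_dvd (Nat.pos_of_ne_zero hne) hv) (by omega)
    · funext x
      have h := DFunLike.congr_fun h0 x
      simp only [LinearMap.zero_apply] at h
      simp only [Finset.sum_apply, Pi.smul_apply, smul_eq_mul, MonoidHom.coe_coe]
      exact h
  -- the key identity
  have key : ∀ (m : G → ZMod p) (lam : L),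
      ∑ σ : G, ((m σ).val : L) * (σ d₀ + (σ lam) ^ p)
        = (∑ σ : G, ((m σ).val : L) * σ d₀) + (T m lam) ^ p := by
    intro m lam
    have hc : ∀ σ : G, ((m σ).val : L) ^ p = ((m σ).val : L) := by
      intro σ
      have := map_natCast (frobenius L p) (m σ).val
      simpa [frobenius_def] using this
    have : (T m lam) ^ p = ∑ σ : G, ((m σ).val : L) * (σ lam) ^ p := by
      show (∑ σ : G, ((m σ).val : L) * σ lam) ^ p = _
      rw [sum_pow_char]
      exact Finset.sum_congr rfl fun σ _ => by rw [mul_pow, hc]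
    rw [this, ← Finset.sum_add_distrib]
    exact Finset.sum_congr rfl fun σ _ => by ring
  -- suppose no good lam₀ exists
  by_contra hcon
  push_neg at hcon
  -- the bad predicate
  set Bad : (G → ZMod p) → L → Prop :=
    fun m lam => ∑ σ : G, ((m σ).val : L) * (σ d₀ + (σ lam) ^ p) = 0 with hBad
  -- index type
  let ι := {m : G → ZMod p // m ≠ 0 ∧ ∃ lam, Bad m lam}
  haveI : Fintype G := AlgEquiv.fintype K L
  haveI : Fintype ι := Subtype.fintype _
  let g : ι → L := fun i => i.2.2.choose
  let H : ι → AddSubgroup L := fun i => (LinearMap.ker (T i.1)).toAddSubgroup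
  have hcovers : ⋃ i ∈ (Finset.univ : Finset ι), g i +ᵥ (H i : Set L) = Set.univ := by
    rw [Set.eq_univ_iff_forall]
    intro lam
    obtain ⟨m, hm, hbad⟩ := hcon lam
    have hbad' : Bad m lam := hbad
    refine Set.mem_biUnion (Finset.mem_univ (⟨m, hm, lam, hbad'⟩ : ι)) ?_
    set i : ι := ⟨m, hm, lam, hbad'⟩
    have hg : Bad m (g i) := i.2.2.choose_spec
    -- T m lam = T m (g i)
    have h1 : (T m lam) ^ p = (T m (g i)) ^ p := by
      have e1 := hbad'; have e2 := hg
      rw [hBad] at e1 e2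
      rw [key] at e1 e2
      exact (eq_neg_of_add_eq_zero_right e1).trans
        (eq_neg_of_add_eq_zero_right e2).symm
    have h2 : T m (lam - g i) = 0 := by
      have : (T m lam - T m (g i)) ^ p = 0 := by
        rw [sub_pow_char, h1, sub_self]
      have := pow_eq_zero_iff (n := p) hp.ne_zero |>.mp this
      rw [map_sub]; exact this
    rw [Set.mem_vadd_set_iff_neg_vadd_mem]
    show -g i + lam ∈ (LinearMap.ker (T i.1) : Set L)
    simpa [neg_add_eq_sub] using h2
  obtain ⟨i, -, hfi⟩ := AddSubgroup.exists_finiteIndex_of_leftCoset_cover hcovers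
  -- ker (T i) is a proper subspace, so L ⧸ ker is an infinite K-module
  have hker : LinearMap.ker (T i.1) < ⊤ := by
    rcases lt_or_eq_of_le (le_top : LinearMap.ker (T i.1) ≤ ⊤) with h | h
    · exact h
    · exfalso
      apply hT i.1 i.2.1
      ext x
      have : x ∈ LinearMap.ker (T i.1) := h.symm ▸ Submodule.mem_top
      simpa using this
  haveI : Finite (L ⧸ LinearMap.ker (T i.1)) :=
    AddSubgroup.finite_quotient_of_finiteIndex
  haveI : Nontrivial (L ⧸ LinearMap.ker (T i.1)) :=
    Submodule.Quotient.nontrivial_iff.mpr hker.ne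
  haveI : Infinite (L ⧸ LinearMap.ker (T i.1)) := Module.Free.infinite K _
  exact not_finite (L ⧸ LinearMap.ker (T i.1))
end

section
/- Let K be a field with fixed algebraic closure K̄, and let Y and Z be schemes of finite type over K. Assume that for every finite extension L of K inside K̄, both gcd{[M:L] : M a finite extension of L inside K̄ with Y(M) ≠ ∅} = 1 and gcd{[M:L] : M a finite extension of L inside K̄ with Z(M) ≠ ∅} = 1. Then gcd{[L:K] : L a finite extension of K inside K̄ with Y(L) ≠ ∅ and Z(L) ≠ ∅} = 1; equivalently, the fiber product Y ×_{Spec K} Z admits a zero-cycle of degree 1 over K. -/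
open AlgebraicGeometry CategoryTheory

universe u

/-- `D ⊆ ℕ` has greatest common divisor `1`, expressed by the existence of a finite subset
whose gcd is `1`. -/
def HasGcdOne (D : Set ℕ) : Prop :=
  ∃ s : Finset ℕ, ↑s ⊆ D ∧ s.gcd id = 1

/-- For a scheme `Y` over `Spec K` (via `fY`) and a commutative ring `M` equipped with a ring
homomorphism `φ : K →+* M`, this says that `Y` has an `M`-point over `K`, i.e. there is a
morphism `Spec M ⟶ Y` of schemes over `Spec K`. -/
def HasPointOver {K : Type u} [CommRing K] {Y : Scheme.{u}}
    (fY : Y ⟶ Spec (CommRingCat.of K)) (M : Type u) [CommRing M] (φ : K →+* M) : Prop :=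
  ∃ g : Spec (CommRingCat.of M) ⟶ Y, g ≫ fY = Spec.map (CommRingCat.ofHom φ)


lemma hasPointOver_comp {K : Type u} [CommRing K] {Y : Scheme.{u}}
    (fY : Y ⟶ Spec (CommRingCat.of K)) {L M : Type u} [CommRing L] [CommRing M]
    (φ : K →+* L) (ψ : L →+* M) (h : HasPointOver fY L φ) :
    HasPointOver fY M (ψ.comp φ) := by
  obtain ⟨g, hg⟩ := h
  refine ⟨Spec.map (CommRingCat.ofHom ψ) ≫ g, ?_⟩
  rw [Category.assoc, hg, ← Spec.map_comp]
  rfl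

lemma exists_mem_not_dvd {D : Set ℕ} (h : HasGcdOne D) {p : ℕ} (hp : p.Prime) :
    ∃ n ∈ D, ¬ p ∣ n := by
  obtain ⟨s, hsD, hs⟩ := h
  by_contra hc
  push_neg at hc
  have hps : p ∣ s.gcd id := Finset.dvd_gcd fun n hn => hc n (hsD hn)
  rw [hs] at hps
  exact hp.ne_one (Nat.dvd_one.mp hps)

lemma hasGcdOne_of_forall_prime {D : Set ℕ} (h0 : ∀ n ∈ D, n ≠ 0)
    (h : ∀ p : ℕ, p.Prime → ∃ n ∈ D, ¬ p ∣ n) : HasGcdOne D := by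
  classical
  obtain ⟨n₀, hn₀D, -⟩ := h 2 Nat.prime_two
  have h' : ∀ p : ℕ, ∃ n, n ∈ D ∧ (p.Prime → ¬ p ∣ n) := by
    intro p
    by_cases hp : p.Prime
    · obtain ⟨n, hnD, hn⟩ := h p hp
      exact ⟨n, hnD, fun _ => hn⟩
    · exact ⟨n₀, hn₀D, fun hp' => absurd hp' hp⟩
  choose f hfD hf using h'
  refine ⟨insert n₀ (n₀.primeFactors.image f), ?_, ?_⟩
  · intro x hx
    simp only [Finset.coe_insert, Set.mem_insert_iff, Finset.coe_image, Set.mem_image] at hx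
    rcases hx with rfl | ⟨p, _, rfl⟩
    · exact hn₀D
    · exact hfD p
  · rw [Nat.eq_one_iff_not_exists_prime_dvd]
    rintro p hp hdvd
    have hpn₀ : p ∣ n₀ := hdvd.trans (Finset.gcd_dvd (Finset.mem_insert_self _ _))
    have hpf : p ∈ n₀.primeFactors :=
      Nat.mem_primeFactors.mpr ⟨hp, hpn₀, h0 n₀ hn₀D⟩
    have : p ∣ f p := hdvd.trans (Finset.gcd_dvd
      (Finset.mem_insert_of_mem (Finset.mem_image_of_mem f hpf)))
    exact hf p hp this

/-- Let `K` be a field with fixed algebraic closure `K̄`, and let `Y` and `Z` be schemes of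
finite type over `K` (locally of finite type and quasi-compact over `Spec K`).  Assume that
for every finite extension `L` of `K` inside `K̄`,
`gcd {[M : L] : M/L finite inside K̄ with Y(M) ≠ ∅} = 1` and likewise for `Z`.  Then
`gcd {[L : K] : L/K finite inside K̄ with Y(L) ≠ ∅ and Z(L) ≠ ∅} = 1`; equivalently, the
fiber product `Y ×_{Spec K} Z` admits a zero-cycle of degree `1` over `K`. -/
theorem statement9 (K : Type u) [Field K]
    (Y Z : Scheme.{u})
    (fY : Y ⟶ Spec (CommRingCat.of K)) (fZ : Z ⟶ Spec (CommRingCat.of K))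
    [LocallyOfFiniteType fY] [QuasiCompact fY] [LocallyOfFiniteType fZ] [QuasiCompact fZ]
    (hY : ∀ L : IntermediateField K (AlgebraicClosure K), FiniteDimensional K L →
      HasGcdOne {n | ∃ M : IntermediateField L (AlgebraicClosure K),
        FiniteDimensional L M ∧ n = Module.finrank L M ∧
        HasPointOver fY M ((algebraMap L M).comp (algebraMap K L))})
    (hZ : ∀ L : IntermediateField K (AlgebraicClosure K), FiniteDimensional K L →
      HasGcdOne {n | ∃ M : IntermediateField L (AlgebraicClosure K),
        FiniteDimensional L M ∧ n = Module.finrank L M ∧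
        HasPointOver fZ M ((algebraMap L M).comp (algebraMap K L))}) :
    HasGcdOne {n | ∃ L : IntermediateField K (AlgebraicClosure K),
      FiniteDimensional K L ∧ n = Module.finrank K L ∧
      HasPointOver fY L (algebraMap K L) ∧ HasPointOver fZ L (algebraMap K L)} := by
  apply hasGcdOne_of_forall_prime
  · rintro n ⟨L, hL, rfl, -⟩
    exact Module.finrank_pos.ne'
  · intro p hp
    -- Step 1: get L/K with a Y-point and p ∤ [L:K], using hY at ⊥.
    obtain ⟨n₁, ⟨M₁, hM₁fin, hn₁, hM₁pt⟩, hpn₁⟩ :=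
      exists_mem_not_dvd (hY ⊥ inferInstance) hp
    set L : IntermediateField K (AlgebraicClosure K) := M₁.restrictScalars K with hLdef
    haveI hLfin : FiniteDimensional K L :=
      by have h := Module.Finite.trans (R := K) (↥(⊥ : IntermediateField K (AlgebraicClosure K))) ↥M₁; exact h
    have hLrank : Module.finrank K L = n₁ := by
      have := Module.finrank_mul_finrank K
        (↥(⊥ : IntermediateField K (AlgebraicClosure K))) ↥M₁
      rw [IntermediateField.finrank_bot, one_mul] at this
      rw [hn₁]
      exact this.symm
    have hLpt : HasPointOver fY L (algebraMap K L) := hM₁pt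
    -- Step 2: get M/L with a Z-point and p ∤ [M:L], using hZ at L.
    obtain ⟨n₂, ⟨M₂, hM₂fin, hn₂, hM₂pt⟩, hpn₂⟩ :=
      exists_mem_not_dvd (hZ L hLfin) hp
    refine ⟨Module.finrank K (M₂.restrictScalars K),
      ⟨M₂.restrictScalars K, (by have h := Module.Finite.trans (R := K) (↥L) ↥M₂; exact h), rfl, ?_, hM₂pt⟩, ?_⟩
    · exact hasPointOver_comp fY (algebraMap K L) (algebraMap (↥L) ↥M₂) hLpt
    · have hrank : Module.finrank K (M₂.restrictScalars K) =
          Module.finrank K L * Module.finrank (↥L) ↥M₂ :=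
        (Module.finrank_mul_finrank K (↥L) ↥M₂).symm
      rw [hrank]
      intro hdvd
      rcases hp.dvd_mul.mp hdvd with h | h
      · rw [hLrank] at h; exact hpn₁ h
      · rw [← hn₂] at h; exact hpn₂ h
end
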